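/- Any real-valued logic that satisfies P1 is an extension of Gödel logic: if L = Taut(T,*) for some continuous t-norm * and algebra of truth values T, and L satisfies P1, then Taut([0,1],min) ⊆ L. -/

import Mathlib

open Set

noncomputable section

/-- The real unit interval `[0,1]` as a subset of `ℝ`. -/
def I01 : Set ℝ := Set.Icc 0 1

/-- A continuous t-norm on `[0,1]`. -/
structure ContTNorm where
  mul : ℝ → ℝ → ℝ
  maps_to : ∀ x ∈ I01, ∀ y ∈ I01, mul x y ∈ I01
  continuousOn : ContinuousOn (fun p : ℝ × ℝ => mul p.1 p.2) (I01 ×ˢ I01)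
  assoc : ∀ x ∈ I01, ∀ y ∈ I01, ∀ z ∈ I01, mul (mul x y) z = mul x (mul y z)
  comm : ∀ x ∈ I01, ∀ y ∈ I01, mul x y = mul y x
  mono : ∀ a ∈ I01, ∀ b ∈ I01, ∀ c ∈ I01, b ≤ c → mul a b ≤ mul a c
  one_mul' : ∀ x ∈ I01, mul 1 x = x

/-- The residuum of a t-norm: `x →* y := sup { c ∈ [0,1] | x * c ≤ y }`. -/
def resid (t : ContTNorm) (x y : ℝ) : ℝ :=
  sSup {c | c ∈ I01 ∧ t.mul x c ≤ y}

/-- An algebra of truth values for the t-norm `t`: a subset of `[0,1]` containing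
`0` and `1` and closed under `t.mul` and its residuum. -/
structure TruthAlg (t : ContTNorm) where
  carrier : Set ℝ
  subset : carrier ⊆ I01
  zero_mem : (0:ℝ) ∈ carrier
  one_mem : (1:ℝ) ∈ carrier
  mul_mem : ∀ x ∈ carrier, ∀ y ∈ carrier, t.mul x y ∈ carrier
  resid_mem : ∀ x ∈ carrier, ∀ y ∈ carrier, resid t x y ∈ carrier

/-- Propositional formulas over countably many variables with `&`, `→`, `⊥`. -/
inductive Formula : Type
  | var : ℕ → Formula
  | bot : Formula
  | conj : Formula → Formula → Formula
  | impl : Formula → Formula → Formula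

/-- `α ↔ β := (α → β) & (β → α)`. -/
def Formula.iff (a b : Formula) : Formula := .conj (.impl a b) (.impl b a)

/-- The valuation determined by an assignment `v` of reals to the variables. -/
def eval (t : ContTNorm) (v : ℕ → ℝ) : Formula → ℝ
  | .var i => v i
  | .bot => 0
  | .conj a b => t.mul (eval t v a) (eval t v b)
  | .impl a b => resid t (eval t v a) (eval t v b)

/-- A valuation into `(T, t)` is (identified with) an assignment of values of `T`
to the propositional variables. -/
def IsValuation (t : ContTNorm) (T : TruthAlg t) (v : ℕ → ℝ) : Prop :=
  ∀ i, v i ∈ T.carrier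

/-- The logic induced by `(T, t)`: all formulas true to degree 1 under every valuation. -/
def Taut (t : ContTNorm) (T : TruthAlg t) : Set Formula :=
  {α | ∀ v : ℕ → ℝ, IsValuation t T v → eval t v α = 1}

/-- Principle P1. -/
def P1 (L : Set Formula) : Prop :=
  ∀ (t : ContTNorm) (T : TruthAlg t), Taut t T = L →
    ∀ α β : Formula,
      (Formula.iff α β ∈ L ↔
        ∀ v : ℕ → ℝ, IsValuation t T v → (eval t v α = 1 ↔ eval t v β = 1))

/-- Principle P2. -/
def P2 (L : Set Formula) : Prop :=
  ∀ (t : ContTNorm) (T : TruthAlg t), Taut t T = L →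
    ∀ v w : ℕ → ℝ, IsValuation t T v → IsValuation t T w → v ≠ w →
      ∃ α : Formula, 0 < eval t v α ∧ eval t w α = 0

/-- The Gödel t-norm: minimum. -/
def minT : ContTNorm where
  mul := fun x y => min x y
  maps_to := by
    rintro x ⟨hx0, hx1⟩ y ⟨hy0, hy1⟩
    exact ⟨le_min hx0 hy0, min_le_of_left_le hx1⟩
  continuousOn := (continuous_fst.min continuous_snd).continuousOn
  assoc := fun x _ y _ z _ => min_assoc x y z
  comm := fun x _ y _ => min_comm x y
  mono := fun a _ b _ c _ h => min_le_min le_rfl h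
  one_mul' := by rintro x ⟨hx0, hx1⟩; exact min_eq_right hx1

/-- The Łukasiewicz t-norm: `x ⊙ y = max 0 (x + y - 1)`. -/
def lukT : ContTNorm where
  mul := fun x y => max 0 (x + y - 1)
  maps_to := by
    rintro x ⟨hx0, hx1⟩ y ⟨hy0, hy1⟩
    exact ⟨le_max_left _ _, max_le zero_le_one (by linarith)⟩
  continuousOn :=
    (continuous_const.max ((continuous_fst.add continuous_snd).sub continuous_const)).continuousOn
  assoc := by
    rintro x ⟨hx0, hx1⟩ y ⟨hy0, hy1⟩ z ⟨hz0, hz1⟩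
    simp only [max_def]
    split_ifs <;> linarith
  comm := by intro x _ y _; rw [add_comm]
  mono := by
    rintro a _ b _ c _ h
    exact max_le_max le_rfl (by linarith)
  one_mul' := by
    rintro x ⟨hx0, hx1⟩
    rw [show (1:ℝ) + x - 1 = x by ring, max_eq_right hx0]

/-- The product t-norm: ordinary multiplication. -/
def prodT : ContTNorm where
  mul := fun x y => x * y
  maps_to := by
    rintro x ⟨hx0, hx1⟩ y ⟨hy0, hy1⟩
    exact ⟨mul_nonneg hx0 hy0, by nlinarith⟩
  continuousOn := (continuous_fst.mul continuous_snd).continuousOn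
  assoc := fun x _ y _ z _ => mul_assoc x y z
  comm := fun x _ y _ => mul_comm x y
  mono := by rintro a ⟨ha0, _⟩ b _ c _ h; exact mul_le_mul_of_nonneg_left h ha0
  one_mul' := fun x _ => one_mul x

lemma ContTNorm.mul_zero' (t : ContTNorm) {x : ℝ} (hx : x ∈ I01) : t.mul x 0 = 0 := by
  have h01 : (0:ℝ) ∈ I01 := ⟨le_rfl, zero_le_one⟩
  have h11 : (1:ℝ) ∈ I01 := ⟨zero_le_one, le_rfl⟩
  have h1 : t.mul x 0 = t.mul 0 x := t.comm x hx 0 h01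
  have h2 : t.mul 0 x ≤ t.mul 0 1 := t.mono 0 h01 x hx 1 h11 hx.2
  have h3 : t.mul 0 1 = t.mul 1 0 := t.comm 0 h01 1 h11
  have h4 : t.mul 1 0 = 0 := t.one_mul' 0 h01
  have h5 : t.mul x 0 ∈ I01 := t.maps_to x hx 0 h01
  rw [h3, h4] at h2
  rw [h1] at h5 ⊢
  exact le_antisymm h2 h5.1

lemma resid_mem_I01 (t : ContTNorm) {x y : ℝ} (hx : x ∈ I01) (hy : y ∈ I01) :
    resid t x y ∈ I01 := by
  have h01 : (0:ℝ) ∈ I01 := ⟨le_rfl, zero_le_one⟩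
  have h0 : (0:ℝ) ∈ {c | c ∈ I01 ∧ t.mul x c ≤ y} :=
    ⟨h01, by rw [t.mul_zero' hx]; exact hy.1⟩
  have hbdd : BddAbove {c | c ∈ I01 ∧ t.mul x c ≤ y} := ⟨1, fun c hc => hc.1.2⟩
  constructor
  · exact le_csSup hbdd h0
  · exact csSup_le ⟨0, h0⟩ fun c hc => hc.1.2

/-- The full algebra of truth values `[0,1]` for a t-norm `t`. -/
def fullAlg (t : ContTNorm) : TruthAlg t where
  carrier := I01
  subset := le_rfl
  zero_mem := ⟨le_rfl, zero_le_one⟩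
  one_mem := ⟨zero_le_one, le_rfl⟩
  mul_mem := t.maps_to
  resid_mem := fun _ hx _ hy => resid_mem_I01 t hx hy

lemma resid_eq_one_of_le (t : ContTNorm) {x y : ℝ} (hx : x ∈ I01) (hy : y ∈ I01)
    (hxy : x ≤ y) : resid t x y = 1 := by
  have h11 : (1:ℝ) ∈ I01 := ⟨zero_le_one, le_rfl⟩
  have hmul : t.mul x 1 = x := by rw [t.comm x hx 1 h11]; exact t.one_mul' x hx
  have h1 : (1:ℝ) ∈ {c | c ∈ I01 ∧ t.mul x c ≤ y} := ⟨h11, by rw [hmul]; exact hxy⟩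
  have hbdd : BddAbove {c | c ∈ I01 ∧ t.mul x c ≤ y} := ⟨1, fun c hc => hc.1.2⟩
  exact le_antisymm (csSup_le ⟨1, h1⟩ fun c hc => hc.1.2) (le_csSup hbdd h1)

lemma resid_one_zero (t : ContTNorm) : resid t 1 0 = 0 := by
  have : {c | c ∈ I01 ∧ t.mul 1 c ≤ 0} = {0} := by
    ext c
    constructor
    · rintro ⟨hc, hle⟩
      have := t.one_mul' c hc
      have := hc.1
      simp only [Set.mem_singleton_iff]
      linarith [this, (t.one_mul' c hc) ▸ hle]
    · rintro rfl
      exact ⟨⟨le_rfl, zero_le_one⟩, by rw [t.mul_zero' ⟨zero_le_one, le_rfl⟩]⟩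
  rw [resid, this, csSup_singleton]

/-- The two-element algebra of truth values `{0,1}`. -/
def boolAlg (t : ContTNorm) : TruthAlg t where
  carrier := {0, 1}
  subset := by
    rintro x (rfl | rfl)
    · exact ⟨le_rfl, zero_le_one⟩
    · exact ⟨zero_le_one, le_rfl⟩
  zero_mem := Or.inl rfl
  one_mem := Or.inr rfl
  mul_mem := by
    have h01 : (0:ℝ) ∈ I01 := ⟨le_rfl, zero_le_one⟩
    have h11 : (1:ℝ) ∈ I01 := ⟨zero_le_one, le_rfl⟩
    rintro x (rfl | rfl) y (rfl | rfl)
    · exact Or.inl (t.mul_zero' h01)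
    · exact Or.inl (by rw [t.comm 0 h01 1 h11]; exact t.mul_zero' h11)
    · exact Or.inl (t.mul_zero' h11)
    · exact Or.inr (t.one_mul' 1 h11)
  resid_mem := by
    have h01 : (0:ℝ) ∈ I01 := ⟨le_rfl, zero_le_one⟩
    have h11 : (1:ℝ) ∈ I01 := ⟨zero_le_one, le_rfl⟩
    rintro x (rfl | rfl) y (rfl | rfl)
    · exact Or.inr (resid_eq_one_of_le t h01 h01 le_rfl)
    · exact Or.inr (resid_eq_one_of_le t h01 h11 zero_le_one)
    · exact Or.inl (resid_one_zero t)
    · exact Or.inr (resid_eq_one_of_le t h11 h11 le_rfl)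

/-- Classical logic: the logic induced by the two-element algebra `{0,1}`
(this is independent of the chosen continuous t-norm). -/
def ClassicalLogic : Set Formula := Taut minT (boolAlg minT)


lemma ContTNorm.mul_one' (t : ContTNorm) {x : ℝ} (hx : x ∈ I01) : t.mul x 1 = x := by
  rw [t.comm x hx 1 ⟨zero_le_one, le_rfl⟩, t.one_mul' x hx]

lemma ContTNorm.mul_le_left (t : ContTNorm) {x y : ℝ} (hx : x ∈ I01) (hy : y ∈ I01) :
    t.mul x y ≤ x := by
  have := t.mono x hx y hy 1 ⟨zero_le_one, le_rfl⟩ hy.2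
  rwa [t.mul_one' hx] at this

lemma ContTNorm.mul_le_right (t : ContTNorm) {x y : ℝ} (hx : x ∈ I01) (hy : y ∈ I01) :
    t.mul x y ≤ y := by
  rw [t.comm x hx y hy]; exact t.mul_le_left hy hx

lemma ContTNorm.contOn_left (t : ContTNorm) {x : ℝ} (hx : x ∈ I01) :
    ContinuousOn (fun c => t.mul x c) I01 := by
  have hpair : ContinuousOn (fun c : ℝ => ((x, c) : ℝ × ℝ)) I01 :=
    (continuous_const.prodMk continuous_id).continuousOn
  exact t.continuousOn.comp hpair (fun c hc => ⟨hx, hc⟩)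

lemma resid_set_compact (t : ContTNorm) {x : ℝ} (hx : x ∈ I01) (y : ℝ) :
    IsCompact {c | c ∈ I01 ∧ t.mul x c ≤ y} := by
  have hclosed : IsClosed {c | c ∈ I01 ∧ t.mul x c ≤ y} := by
    have heq : {c | c ∈ I01 ∧ t.mul x c ≤ y} = I01 ∩ (fun c => t.mul x c) ⁻¹' Set.Iic y := rfl
    rw [heq]
    exact ContinuousOn.preimage_isClosed_of_isClosed (t.contOn_left hx) isClosed_Icc isClosed_Iic
  exact IsCompact.of_isClosed_subset isCompact_Icc hclosed (fun c hc => hc.1)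

lemma le_of_resid_eq_one (t : ContTNorm) {x y : ℝ} (hx : x ∈ I01) (hy : y ∈ I01)
    (h : resid t x y = 1) : x ≤ y := by
  have h0 : (0:ℝ) ∈ {c | c ∈ I01 ∧ t.mul x c ≤ y} :=
    ⟨⟨le_rfl, zero_le_one⟩, by rw [t.mul_zero' hx]; exact hy.1⟩
  have hmem := (resid_set_compact t hx y).sSup_mem ⟨0, h0⟩
  rw [show sSup {c | c ∈ I01 ∧ t.mul x c ≤ y} = resid t x y from rfl, h] at hmem
  have := hmem.2
  rwa [t.mul_one' hx] at this

lemma idem_mul_eq_min (t : ContTNorm) {x : ℝ} (hx : x ∈ I01) (hidem : t.mul x x = x)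
    {y : ℝ} (hy : y ∈ I01) : t.mul x y = min x y := by
  rcases le_total y x with hle | hle
  · rw [min_eq_right hle]
    have hmem : y ∈ Set.Icc (t.mul x 0) (t.mul x 1) := by
      rw [t.mul_zero' hx, t.mul_one' hx]; exact ⟨hy.1, hle⟩
    obtain ⟨c, hc, hcy⟩ := intermediate_value_Icc zero_le_one (t.contOn_left hx) hmem
    simp only [] at hcy
    have hcy' : t.mul x c = y := hcy
    calc t.mul x y = t.mul x (t.mul x c) := by rw [hcy']
      _ = t.mul (t.mul x x) c := (t.assoc x hx x hx c hc).symm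
      _ = y := by rw [hidem, hcy]
  · rw [min_eq_left hle]
    have h1 : t.mul x y ≤ x := t.mul_le_left hx hy
    have h2 : t.mul x x ≤ t.mul x y := t.mono x hx x hx y hy hle
    rw [hidem] at h2
    exact le_antisymm h1 h2

lemma resid_of_min (t : ContTNorm) {x y : ℝ} (hx : x ∈ I01) (hy : y ∈ I01)
    (hmin : ∀ c ∈ I01, t.mul x c = min x c) :
    resid t x y = if x ≤ y then 1 else y := by
  split_ifs with hle
  · exact resid_eq_one_of_le t hx hy hle
  · push_neg at hle
    have hset : {c | c ∈ I01 ∧ t.mul x c ≤ y} = Set.Icc 0 y := by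
      ext c
      constructor
      · rintro ⟨hc, hm⟩
        rw [hmin c hc] at hm
        refine ⟨hc.1, ?_⟩
        rcases min_cases x c with ⟨he, _⟩ | ⟨he, hcx⟩
        · rw [he] at hm; linarith
        · rwa [he] at hm
      · rintro ⟨h0, hcy⟩
        have hc : c ∈ I01 := ⟨h0, hcy.trans hy.2⟩
        exact ⟨hc, by rw [hmin c hc]; exact le_trans (min_le_right _ _) hcy⟩
    rw [resid, hset, csSup_Icc hy.1]

lemma idem_of_P1 (t : ContTNorm) (T : TruthAlg t) (h : P1 (Taut t T)) :
    ∀ a ∈ T.carrier, t.mul a a = a := by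
  intro a ha
  have haI := T.subset ha
  have hside : ∀ v : ℕ → ℝ, IsValuation t T v →
      (eval t v (.conj (.var 0) (.var 0)) = 1 ↔ eval t v (.var 0) = 1) := by
    intro v hv
    have hvI := T.subset (hv 0)
    simp only [eval]
    constructor
    · intro h1
      have := t.mul_le_left hvI hvI
      rw [h1] at this
      exact le_antisymm hvI.2 this
    · intro h1
      rw [h1]; exact t.one_mul' 1 ⟨zero_le_one, le_rfl⟩
  have hiff := (h t T rfl (.conj (.var 0) (.var 0)) (.var 0)).mpr hside
  have hval := hiff (fun _ => a) (fun _ => ha)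
  simp only [Formula.iff, eval] at hval
  have hmaa : t.mul a a ∈ I01 := t.maps_to a haI a haI
  have h1 : resid t a (t.mul a a) ∈ I01 := resid_mem_I01 t haI hmaa
  have h2 : resid t (t.mul a a) a ∈ I01 := resid_mem_I01 t hmaa haI
  have hr1 : resid t a (t.mul a a) = 1 := by
    have := t.mul_le_right h2 h1
    rw [hval] at this
    exact le_antisymm h1.2 this
  have hle := le_of_resid_eq_one t haI hmaa hr1
  exact le_antisymm (t.mul_le_left haI haI) hle

lemma eval_min_eq (t : ContTNorm) (T : TruthAlg t)
    (hidem : ∀ a ∈ T.carrier, t.mul a a = a)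
    (v : ℕ → ℝ) (hv : IsValuation t T v) (φ : Formula) :
    eval t v φ ∈ T.carrier ∧ eval t v φ = eval minT v φ := by
  induction φ with
  | var i => exact ⟨hv i, rfl⟩
  | bot => exact ⟨T.zero_mem, rfl⟩
  | conj a b iha ihb =>
    refine ⟨T.mul_mem _ iha.1 _ ihb.1, ?_⟩
    have haI := T.subset iha.1
    have hbI := T.subset ihb.1
    show t.mul (eval t v a) (eval t v b) = min (eval minT v a) (eval minT v b)
    rw [idem_mul_eq_min t haI (hidem _ iha.1) hbI, iha.2, ihb.2]
  | impl a b iha ihb =>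
    refine ⟨T.resid_mem _ iha.1 _ ihb.1, ?_⟩
    have haI := T.subset iha.1
    have hbI := T.subset ihb.1
    show resid t (eval t v a) (eval t v b) = resid minT (eval minT v a) (eval minT v b)
    rw [resid_of_min t haI hbI
        (fun c hc => idem_mul_eq_min t haI (hidem _ iha.1) hc),
      ← iha.2, ← ihb.2,
      resid_of_min minT haI hbI (fun c hc => rfl)]

/-- Any real-valued logic satisfying P1 extends Gödel logic. -/
theorem P1_implies_extends_Godel (t : ContTNorm) (T : TruthAlg t)
    (h : P1 (Taut t T)) : Taut minT (fullAlg minT) ⊆ Taut t T := by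
  intro α hα v hv
  have hidem := idem_of_P1 t T h
  obtain ⟨_, heq⟩ := eval_min_eq t T hidem v hv α
  rw [heq]
  exact hα v (fun i => T.subset (hv i))

end
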